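/- Define a bilinear form on ℝ[x] by {x^a, x^b} = 0 if a + b is odd, and {x^a, x^b} = (1/2)^p · (1/2 + k)(3/2 + k)···(p - 1/2 + k) (the rising factorial (k + 1/2)_p times 2^{-p}) if a + b = 2p. Then this form is symmetric, and it is degenerate (has nonzero radical) if and only if k ∈ {-1/2 - m : m ∈ ℤ≥0}. -/

import Mathlib

open Polynomial

/-- The weight of the Shapovalov form on monomials: `{x^a, x^b}` depends only on
`n = a + b`; it is `0` for odd `n` and `(1/2)^p (k+1/2)_p` for `n = 2p`. -/
noncomputable def shapWeight (k : ℝ) (n : ℕ) : ℝ :=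
  if n % 2 = 1 then 0
  else (1/2 : ℝ) ^ (n / 2) * ∏ i ∈ Finset.range (n / 2), (k + 1/2 + i)

/-- The Shapovalov bilinear form on `ℝ[x]`. -/
noncomputable def shapForm (k : ℝ) (f g : ℝ[X]) : ℝ :=
  f.sum fun a ca => g.sum fun b cb => ca * cb * shapWeight k (a + b)

/-! ### Auxiliary machinery: Pochhammer symbols and finite differences -/

noncomputable def poch (a : ℝ) (n : ℕ) : ℝ := ∏ s ∈ Finset.range n, (a + s)

lemma poch_add (a : ℝ) (p q : ℕ) : poch a (p + q) = poch a p * poch (a + p) q := by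
  unfold poch
  rw [Finset.prod_range_add]
  congr 1
  refine Finset.prod_congr rfl fun s _ => ?_
  push_cast; ring

lemma poch_ne_zero {a : ℝ} (h : ∀ m : ℕ, a + m ≠ 0) (n : ℕ) : poch a n ≠ 0 :=
  Finset.prod_ne_zero_iff.2 fun s _ => h s

lemma poch_succ' (a : ℝ) (n : ℕ) : poch a (n + 1) = a * poch (a + 1) n := by
  unfold poch
  rw [Finset.prod_range_succ']
  rw [mul_comm]
  congr 1
  · ring_nf
  · refine Finset.prod_congr rfl fun s _ => ?_; push_cast; ring

lemma poch_delta (x : ℝ) (i : ℕ) :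
    poch (x + 1) i - poch x i = i * poch (x + 1) (i - 1) := by
  cases i with
  | zero => simp [poch]
  | succ m =>
    rw [poch_succ' x m]
    unfold poch
    rw [Finset.prod_range_succ]
    push_cast
    ring

noncomputable def altsum (n : ℕ) (F : ℕ → ℝ) : ℝ :=
  ∑ j ∈ Finset.range (n + 1), (-1 : ℝ) ^ j * (n.choose j) * F j

lemma altsum_succ (n : ℕ) (F : ℕ → ℝ) :
    altsum (n + 1) F = altsum n F - altsum n (fun j => F (j + 1)) := by
  unfold altsum
  rw [Finset.sum_range_succ' (fun j => (-1 : ℝ) ^ j * ((n+1).choose j) * F j)]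
  rw [Finset.sum_range_succ' (fun j => (-1 : ℝ) ^ j * (n.choose j) * F j)]
  simp only [Nat.choose_succ_succ, Nat.choose_zero_right, pow_zero, Nat.cast_add]
  have h1 : ∀ j ∈ Finset.range (n+1),
      (-1 : ℝ) ^ (j+1) * (((n.choose j : ℝ)) + (n.choose (j+1) : ℝ)) * F (j+1)
      = ((-1 : ℝ) ^ (j+1) * (n.choose (j+1)) * F (j+1))
        + (-1) * ((-1 : ℝ) ^ j * (n.choose j) * F (j+1)) := by
    intro j _; ring
  rw [Finset.sum_congr rfl h1, Finset.sum_add_distrib]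
  rw [Finset.sum_range_succ (fun j => (-1 : ℝ) ^ (j+1) * (n.choose (j+1)) * F (j+1))]
  simp only [Nat.choose_succ_self, Nat.cast_zero]
  rw [← Finset.mul_sum]
  ring

lemma altsum_smul (n : ℕ) (c : ℝ) (F : ℕ → ℝ) :
    altsum n (fun j => c * F j) = c * altsum n F := by
  unfold altsum; rw [Finset.mul_sum]; exact Finset.sum_congr rfl fun j _ => by ring

lemma altsum_step (n : ℕ) (a : ℝ) (i : ℕ) :
    altsum (n + 1) (fun j => poch (a + j) i)
      = -((i : ℝ) * altsum n (fun j => poch ((a + 1) + j) (i - 1))) := by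
  have h1 : altsum n (fun j => poch (a + ↑(j + 1)) i)
      - altsum n (fun j => poch (a + j) i)
      = altsum n (fun j => (i : ℝ) * poch ((a + 1) + j) (i - 1)) := by
    unfold altsum
    rw [← Finset.sum_sub_distrib]
    refine Finset.sum_congr rfl fun j _ => ?_
    have : poch (a + ↑(j + 1)) i - poch (a + j) i
        = (i : ℝ) * poch ((a + 1) + j) (i - 1) := by
      have := poch_delta (a + j) i
      have e1 : (a : ℝ) + ↑(j + 1) = (a + ↑j) + 1 := by push_cast; ring
      have e2 : (a + ↑j) + 1 = (a + 1) + ↑j := by ring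
      rw [e1, this, e2]
    beta_reduce
    rw [← this]; ring
  rw [altsum_succ, ← neg_sub, h1, altsum_smul]

lemma altsum_poch_lt (n : ℕ) : ∀ (a : ℝ) (i : ℕ), i < n →
    altsum n (fun j => poch (a + j) i) = 0 := by
  induction n with
  | zero => intro a i hi; omega
  | succ n ih =>
    intro a i hi
    rw [altsum_step]
    rcases Nat.eq_zero_or_pos i with h0 | h0
    · simp [h0]
    · rw [ih (a + 1) (i - 1) (by omega)]; ring

lemma altsum_poch_self (n : ℕ) : ∀ (a : ℝ),
    altsum n (fun j => poch (a + j) n) = (-1 : ℝ) ^ n * (n.factorial : ℝ) := by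
  induction n with
  | zero => intro a; simp [altsum, poch]
  | succ n ih =>
    intro a
    rw [altsum_step]
    have : (n + 1 : ℕ) - 1 = n := by omega
    rw [this, ih (a + 1)]
    rw [Nat.factorial_succ]
    push_cast; ring

lemma poch_mul_ident (a : ℝ) {j n : ℕ} (hj : j ≤ n) (i : ℕ) :
    poch (a + j) (n - j) * poch a (i + j) = poch a n * poch (a + j) i := by
  have h1 : poch a (i + j) = poch a j * poch (a + j) i := by
    rw [add_comm i j, poch_add]
  have h2 : poch a j * poch (a + j) (n - j) = poch a n := by
    rw [← poch_add]; congr 1; omega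
  rw [h1, ← h2]; ring

lemma core_step (a : ℝ) (M n : ℕ) (hn : n < M) (d : ℕ → ℝ)
    (hp : poch a n ≠ 0)
    (h : ∀ j : ℕ, ∑ i ∈ Finset.range M, d i * poch a (i + j) = 0)
    (hz : ∀ i, n < i → i < M → d i = 0) : d n = 0 := by
  have key : (0 : ℝ) = ∑ i ∈ Finset.range M,
      d i * poch a n * altsum n (fun j => poch (a + j) i) := by
    calc (0 : ℝ)
        = ∑ j ∈ Finset.range (n + 1), (-1 : ℝ) ^ j * (n.choose j) * poch (a + j) (n - j)
            * (∑ i ∈ Finset.range M, d i * poch a (i + j)) := by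
          symm; refine Finset.sum_eq_zero fun j _ => ?_; rw [h j, mul_zero]
      _ = ∑ j ∈ Finset.range (n + 1), ∑ i ∈ Finset.range M,
            (-1 : ℝ) ^ j * (n.choose j) * poch (a + j) (n - j) * (d i * poch a (i + j)) := by
          refine Finset.sum_congr rfl fun j _ => ?_; rw [Finset.mul_sum]
      _ = ∑ i ∈ Finset.range M, ∑ j ∈ Finset.range (n + 1),
            (-1 : ℝ) ^ j * (n.choose j) * poch (a + j) (n - j) * (d i * poch a (i + j)) :=
          Finset.sum_comm
      _ = ∑ i ∈ Finset.range M,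
            d i * poch a n * altsum n (fun j => poch (a + j) i) := by
          refine Finset.sum_congr rfl fun i _ => ?_
          unfold altsum
          rw [Finset.mul_sum]
          refine Finset.sum_congr rfl fun j hj => ?_
          have hjn : j ≤ n := by simpa [Nat.lt_succ_iff] using Finset.mem_range.1 hj
          have := poch_mul_ident a hjn i
          beta_reduce
          linear_combination ((-1 : ℝ) ^ j * (n.choose j) * d i) * this
  rw [Finset.sum_eq_single n (fun i hi hne => ?_) (fun hmem => ?_)] at key
  · rw [altsum_poch_self] at key
    have hf : (n.factorial : ℝ) ≠ 0 := Nat.cast_ne_zero.2 n.factorial_ne_zero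
    have hpow : ((-1 : ℝ) ^ n) ≠ 0 := by positivity
    field_simp at key
    rcases mul_eq_zero.1 key.symm with h | h
    · rcases mul_eq_zero.1 h with h | h
      · exact (mul_eq_zero.1 h).resolve_right hp
      · exact absurd h hpow
    · exact absurd h hf
  · rcases Nat.lt_or_ge i n with hlt | hge
    · rw [altsum_poch_lt n a i hlt, mul_zero]
    · have hni : n < i := by omega
      rw [hz i hni (Finset.mem_range.1 hi), zero_mul, zero_mul]
  · exact absurd (Finset.mem_range.2 hn) hmem

lemma core_lemma (a : ℝ) (ha : ∀ m : ℕ, a + m ≠ 0) (M : ℕ) (d : ℕ → ℝ)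
    (h : ∀ j : ℕ, ∑ i ∈ Finset.range M, d i * poch a (i + j) = 0) :
    ∀ n, n < M → d n = 0 := by
  have main : ∀ t n, M ≤ n + t → n < M → d n = 0 := by
    intro t
    induction t with
    | zero => intro n h1 h2; omega
    | succ t ih =>
      intro n h1 h2
      exact core_step a M n h2 d (poch_ne_zero ha n) h
        (fun i hi hiM => ih i (by omega) hiM)
  intro n hn
  exact main (M - n) n (by omega) hn

/-! ### Facts about `shapWeight` and `shapForm` -/

lemma shapWeight_odd (k : ℝ) {n : ℕ} (h : n % 2 = 1) : shapWeight k n = 0 := by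
  unfold shapWeight; rw [if_pos h]

lemma shapWeight_two_mul (k : ℝ) (p : ℕ) :
    shapWeight k (2 * p) = (1/2 : ℝ) ^ p * poch (k + 1/2) p := by
  unfold shapWeight poch
  have h1 : ¬ (2 * p) % 2 = 1 := by omega
  have h2 : 2 * p / 2 = p := by omega
  rw [if_neg h1, h2]

lemma shapForm_symm (k : ℝ) (f g : ℝ[X]) : shapForm k f g = shapForm k g f := by
  unfold shapForm
  simp only [Polynomial.sum_def]
  rw [Finset.sum_comm]
  refine Finset.sum_congr rfl fun b _ => Finset.sum_congr rfl fun a _ => ?_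
  rw [add_comm b a]; ring

lemma shapForm_X_pow (k : ℝ) (f : ℝ[X]) (b M : ℕ) (hM : f.natDegree < M) :
    shapForm k f (X ^ b) = ∑ a ∈ Finset.range M, f.coeff a * shapWeight k (a + b) := by
  unfold shapForm
  have inner : ∀ (a : ℕ) (ca : ℝ),
      ((X : ℝ[X]) ^ b).sum (fun b' cb => ca * cb * shapWeight k (a + b'))
        = ca * shapWeight k (a + b) := by
    intro a ca
    rw [X_pow_eq_monomial, Polynomial.sum_monomial_index _ _ (by simp)]
    ring
  calc f.sum (fun a ca => ((X : ℝ[X]) ^ b).sum fun b' cb => ca * cb * shapWeight k (a + b'))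
      = f.sum (fun a ca => ca * shapWeight k (a + b)) := by
        unfold Polynomial.sum
        exact Finset.sum_congr rfl fun a _ => inner a (f.coeff a)
    _ = ∑ a ∈ Finset.range M, f.coeff a * shapWeight k (a + b) :=
        f.sum_over_range' (by simp) M hM

lemma shapForm_degenerate_of (k : ℝ) (m : ℕ) (hk : k = -(1/2) - m) :
    ∃ f : ℝ[X], f ≠ 0 ∧ ∀ g : ℝ[X], shapForm k f g = 0 := by
  refine ⟨X ^ (2 * m + 2), pow_ne_zero _ X_ne_zero, fun g => ?_⟩
  have hw : ∀ b : ℕ, shapWeight k (2 * m + 2 + b) = 0 := by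
    intro b
    rcases Nat.even_or_odd b with ⟨c, hc⟩ | hodd
    · have : 2 * m + 2 + b = 2 * (m + 1 + c) := by omega
      rw [this, shapWeight_two_mul]
      have hz : k + 1/2 + (m : ℝ) = 0 := by rw [hk]; ring
      rw [poch, Finset.prod_eq_zero (Finset.mem_range.2 (show m < m + 1 + c by omega)) hz,
        mul_zero]
    · obtain ⟨c, hc⟩ := hodd
      exact shapWeight_odd k (by omega)
  unfold shapForm
  rw [X_pow_eq_monomial, Polynomial.sum_monomial_index _ _ (by simp [Polynomial.sum])]
  rw [Polynomial.sum_def]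
  refine Finset.sum_eq_zero fun b _ => ?_
  rw [hw b, mul_zero]

lemma sum_range_two_mul (M : ℕ) (F : ℕ → ℝ) :
    ∑ a ∈ Finset.range (2 * M), F a = ∑ i ∈ Finset.range M, (F (2 * i) + F (2 * i + 1)) := by
  induction M with
  | zero => simp
  | succ M ih =>
    rw [show 2 * (M + 1) = 2 * M + 1 + 1 by ring, Finset.sum_range_succ, Finset.sum_range_succ,
      ih, Finset.sum_range_succ]
    ring

lemma key_reduction (k : ℝ) (hk : ∀ m : ℕ, k ≠ -(1/2) - m) (c : ℕ → ℝ) (M : ℕ)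
    (ε : ℕ) (hε : ε ≤ 1)
    (H : ∀ b : ℕ, ∑ a ∈ Finset.range (2 * M), c a * shapWeight k (a + b) = 0) :
    ∀ i, i < M → c (2 * i + ε) = 0 := by
  set a : ℝ := k + 1/2 + ε with ha_def
  have hzero : ∀ m : ℕ, k + 1/2 + (m : ℝ) ≠ 0 := by
    intro m hcon
    exact hk m (by linarith)
  have ha : ∀ m : ℕ, a + m ≠ 0 := by
    intro m hcon
    apply hzero (ε + m)
    rw [ha_def] at hcon
    push_cast at hcon ⊢; linarith
  set d : ℕ → ℝ := fun i => c (2 * i + ε) * (1/2 : ℝ) ^ i with hd_def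
  have claim : ∀ i j : ℕ,
      c (2 * i) * shapWeight k (2 * i + (2 * j + ε))
        + c (2 * i + 1) * shapWeight k (2 * i + 1 + (2 * j + ε))
      = ((1/2 : ℝ) ^ (j + ε) * poch (k + 1/2) ε) * (d i * poch a (i + j)) := by
    intro i j
    interval_cases ε
    · have h1 : shapWeight k (2 * i + 1 + (2 * j + 0)) = 0 := shapWeight_odd k (by omega)
      have h2 : 2 * i + (2 * j + 0) = 2 * (i + j) := by omega
      rw [h1, h2, shapWeight_two_mul]
      simp only [hd_def, ha_def, poch]
      push_cast
      rw [pow_add]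
      ring_nf
    · have h1 : shapWeight k (2 * i + (2 * j + 1)) = 0 := shapWeight_odd k (by omega)
      have h2 : 2 * i + 1 + (2 * j + 1) = 2 * (i + j + 1) := by omega
      rw [h1, h2, shapWeight_two_mul]
      have h3 : poch (k + 1/2) (i + j + 1) = poch (k + 1/2) 1 * poch (k + 1/2 + 1) (i + j) := by
        rw [show i + j + 1 = 1 + (i + j) by omega, poch_add]
        norm_num
      rw [h3]
      have h4 : a = k + 1/2 + 1 := by rw [ha_def]; norm_num
      rw [← h4]
      simp only [hd_def]
      rw [pow_add, pow_add]
      ring_nf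
  have Hd : ∀ j : ℕ, ∑ i ∈ Finset.range M, d i * poch a (i + j) = 0 := by
    intro j
    have h0 := H (2 * j + ε)
    rw [sum_range_two_mul M (fun a' => c a' * shapWeight k (a' + (2 * j + ε)))] at h0
    have h1 : ∑ i ∈ Finset.range M,
        (c (2 * i) * shapWeight k (2 * i + (2 * j + ε))
          + c (2 * i + 1) * shapWeight k (2 * i + 1 + (2 * j + ε)))
        = ((1/2 : ℝ) ^ (j + ε) * poch (k + 1/2) ε)
            * ∑ i ∈ Finset.range M, d i * poch a (i + j) := by
      rw [Finset.mul_sum]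
      exact Finset.sum_congr rfl fun i _ => claim i j
    rw [h1] at h0
    have hne : (1/2 : ℝ) ^ (j + ε) * poch (k + 1/2) ε ≠ 0 :=
      mul_ne_zero (pow_ne_zero _ (by norm_num)) (poch_ne_zero hzero ε)
    exact (mul_eq_zero.1 h0).resolve_left hne
  intro i hi
  have := core_lemma a ha M d Hd i hi
  have hp : ((1/2 : ℝ) ^ i) ≠ 0 := pow_ne_zero _ (by norm_num)
  simp only [hd_def] at this
  exact (mul_eq_zero.1 this).resolve_right hp

/-- The form is symmetric, and degenerate iff `k = -1/2 - m` for some `m ∈ ℤ≥0`. -/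
theorem shapForm_symm_and_degenerate_iff (k : ℝ) :
    (∀ f g : ℝ[X], shapForm k f g = shapForm k g f) ∧
    ((∃ f : ℝ[X], f ≠ 0 ∧ ∀ g : ℝ[X], shapForm k f g = 0) ↔
      ∃ m : ℕ, k = -(1/2) - m) := by
  refine ⟨shapForm_symm k, ?_, fun ⟨m, hm⟩ => shapForm_degenerate_of k m hm⟩
  rintro ⟨f, hf0, hrad⟩
  by_contra hcon
  push_neg at hcon
  apply hf0
  set N := f.natDegree with hN
  have H : ∀ b : ℕ, ∑ a ∈ Finset.range (2 * (N + 1)), f.coeff a * shapWeight k (a + b) = 0 := by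
    intro b
    have h := hrad (X ^ b)
    rwa [shapForm_X_pow k f b (2 * (N + 1)) (by omega)] at h
  ext a₀
  rcases Nat.lt_or_ge N a₀ with hlt | hle
  · simp [coeff_eq_zero_of_natDegree_lt hlt]
  · have key := key_reduction k hcon f.coeff (N + 1) (a₀ % 2) (by omega) H (a₀ / 2) (by omega)
    rw [show 2 * (a₀ / 2) + a₀ % 2 = a₀ by omega] at key
    simpa using key
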